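/- arXiv:1405.4312 — 4 statements merged into one kernel-verified Lean document; each statement's English description precedes it below -/
import Mathlib

section
/- Let t_{n,k} be the number of permutations of {1,…,n} with k components (defined via the standard recursion). Then for n ≥ 2 and 2 ≤ s ≤ n, the identity t_{n+1,s} = (n−s+2)! + Σ_{j=s}^{n} (n+1−j)! (t_{j,s−1} − t_{j,s}) holds. -/
open Finset

/-- For the numbers `t n k` of permutations of `{1,…,n}` with `k` components (defined via the
standard recursion), for `n ≥ 2` and `2 ≤ s ≤ n` one has
`t (n+1) s = (n-s+2)! + Σ_{j=s}^{n} (n+1-j)! (t j (s-1) - t j s)`. -/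
theorem perm_components_identity
    (t : ℕ → ℕ → ℤ)
    (h1 : ∀ n : ℕ, 1 ≤ n →
      t n 1 = (Nat.factorial n : ℤ) -
        ∑ j ∈ Finset.Icc 1 (n - 1), (Nat.factorial (n - j) : ℤ) * t j 1)
    (h2 : ∀ n k : ℕ, 2 ≤ k → k ≤ n →
      t n k = ∑ j ∈ Finset.Icc 1 (n - k + 1), t j 1 * t (n - j) (k - 1))
    (h3 : ∀ n k : ℕ, 1 ≤ k → n < k → t n k = 0) :
    ∀ n s : ℕ, 2 ≤ n → 2 ≤ s → s ≤ n →
      t (n + 1) s = (Nat.factorial (n - s + 2) : ℤ) +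
        ∑ j ∈ Finset.Icc s n, (Nat.factorial (n + 1 - j) : ℤ) * (t j (s - 1) - t j s) := by
  -- Lemma A : ∑_{j=1}^p (p-j)! t_{j,1} = p!
  have hA : ∀ p : ℕ, 1 ≤ p →
      ∑ j ∈ Icc 1 p, (Nat.factorial (p - j) : ℤ) * t j 1 = (Nat.factorial p : ℤ) := by
    intro p hp
    obtain ⟨q, rfl⟩ : ∃ q, p = q + 1 := ⟨p - 1, by omega⟩
    rw [Finset.sum_Icc_succ_top (by omega : 1 ≤ q + 1)]
    have h := h1 (q + 1) (by omega)
    simp only [Nat.add_sub_cancel] at h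
    rw [h]
    simp [Nat.sub_self]
  -- Lemma B : extended recursion
  have hB : ∀ j k : ℕ, 2 ≤ k →
      t j k = ∑ i ∈ Icc 1 (j - 1), t i 1 * t (j - i) (k - 1) := by
    intro j k hk
    by_cases hjk : k ≤ j
    · rw [h2 j k hk hjk]
      apply Finset.sum_subset
      · intro i hi
        simp only [mem_Icc] at hi ⊢
        omega
      · intro i hi hni
        simp only [mem_Icc] at hi hni
        rw [h3 (j - i) (k - 1) (by omega) (by omega), mul_zero]
    · rw [h3 j k (by omega) (by omega)]
      symm
      apply Finset.sum_eq_zero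
      intro i hi
      simp only [mem_Icc] at hi
      rw [h3 (j - i) (k - 1) (by omega) (by omega), mul_zero]
  -- diagonal values
  have hdiag : ∀ k : ℕ, 1 ≤ k → t k k = 1 := by
    intro k
    induction k with
    | zero => omega
    | succ m ih =>
      intro _
      by_cases hm : m = 0
      · subst hm
        have h := h1 1 le_rfl
        simpa using h
      · rw [h2 (m + 1) (m + 1) (by omega) le_rfl]
        have : m + 1 - (m + 1) + 1 = 1 := by omega
        rw [this]
        have h1' : t 1 1 = 1 := by simpa using h1 1 le_rfl
        simp [h1', Nat.add_sub_cancel, ih (by omega)]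
  -- Key lemma
  have hK : ∀ m k : ℕ, 2 ≤ k → 1 ≤ m →
      ∑ j ∈ Icc 1 m, (Nat.factorial (m - j) : ℤ) * t j k
        = ∑ j ∈ Icc 1 (m - 1), (Nat.factorial (m - j) : ℤ) * t j (k - 1) := by
    intro m k hk hm
    calc ∑ j ∈ Icc 1 m, (Nat.factorial (m - j) : ℤ) * t j k
        = ∑ j ∈ Icc 1 m, ∑ i ∈ Icc 1 (j - 1),
            (Nat.factorial (m - j) : ℤ) * (t i 1 * t (j - i) (k - 1)) := by
          refine Finset.sum_congr rfl fun j _ => ?_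
          rw [hB j k hk, Finset.mul_sum]
      _ = ∑ p ∈ (Icc 1 m).sigma (fun j => Icc 1 (j - 1)),
            (Nat.factorial (m - p.1) : ℤ) * (t p.2 1 * t (p.1 - p.2) (k - 1)) := by
          rw [Finset.sum_sigma]
      _ = ∑ p ∈ (Icc 1 (m - 1)).sigma (fun l => Icc 1 (m - l)),
            (Nat.factorial (m - p.1 - p.2) : ℤ) * (t p.2 1 * t p.1 (k - 1)) := by
          apply Finset.sum_nbij' (fun p => (⟨p.1 - p.2, p.2⟩ : (_ : ℕ) × ℕ))
            (fun p => (⟨p.1 + p.2, p.2⟩ : (_ : ℕ) × ℕ))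
          · intro a ha
            simp only [Finset.mem_sigma, mem_Icc] at ha ⊢
            omega
          · intro a ha
            simp only [Finset.mem_sigma, mem_Icc] at ha ⊢
            omega
          · intro a ha
            simp only [Finset.mem_sigma, mem_Icc] at ha
            ext <;> simp <;> try omega
          · intro a ha
            simp only [Finset.mem_sigma, mem_Icc] at ha
            ext <;> simp <;> try omega
          · intro a ha
            simp only [Finset.mem_sigma, mem_Icc] at ha
            have e1 : m - (a.1 - a.2) - a.2 = m - a.1 := by omega
            have e2 : a.1 - a.2 - (a.1 - a.2) = 0 := by omega
            simp only [e1]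
      _ = ∑ l ∈ Icc 1 (m - 1), ∑ i ∈ Icc 1 (m - l),
            (Nat.factorial (m - l - i) : ℤ) * (t i 1 * t l (k - 1)) := by
          rw [Finset.sum_sigma]
      _ = ∑ l ∈ Icc 1 (m - 1), (Nat.factorial (m - l) : ℤ) * t l (k - 1) := by
          refine Finset.sum_congr rfl fun l hl => ?_
          simp only [mem_Icc] at hl
          rw [show (∑ i ∈ Icc 1 (m - l), (Nat.factorial (m - l - i) : ℤ) * (t i 1 * t l (k - 1)))
              = (∑ i ∈ Icc 1 (m - l), (Nat.factorial (m - l - i) : ℤ) * t i 1) * t l (k - 1) by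
            rw [Finset.sum_mul]; exact Finset.sum_congr rfl fun i _ => by ring]
          rw [hA (m - l) (by omega)]
  -- main proof
  intro n s hn hs hsn
  have e1 := hK (n + 1) s hs (by omega)
  simp only [Nat.add_sub_cancel] at e1
  have eL : ∑ j ∈ Icc 1 (n + 1), (Nat.factorial (n + 1 - j) : ℤ) * t j s
      = t (n + 1) s + ∑ j ∈ Icc s n, (Nat.factorial (n + 1 - j) : ℤ) * t j s := by
    rw [Finset.sum_Icc_succ_top (by omega : 1 ≤ n + 1)]
    rw [Nat.sub_self]
    simp only [Nat.factorial_zero, Nat.cast_one, one_mul]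
    rw [add_comm]
    congr 1
    symm
    apply Finset.sum_subset
    · intro i hi; simp only [mem_Icc] at hi ⊢; omega
    · intro i hi hni
      simp only [mem_Icc] at hi hni
      rw [h3 i s (by omega) (by omega), mul_zero]
  have eR : ∑ j ∈ Icc 1 n, (Nat.factorial (n + 1 - j) : ℤ) * t j (s - 1)
      = (Nat.factorial (n - s + 2) : ℤ)
        + ∑ j ∈ Icc s n, (Nat.factorial (n + 1 - j) : ℤ) * t j (s - 1) := by
    have hsub : ∑ j ∈ Icc 1 n, (Nat.factorial (n + 1 - j) : ℤ) * t j (s - 1)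
        = ∑ j ∈ Icc (s - 1) n, (Nat.factorial (n + 1 - j) : ℤ) * t j (s - 1) := by
      symm
      apply Finset.sum_subset
      · intro i hi; simp only [mem_Icc] at hi ⊢; omega
      · intro i hi hni
        simp only [mem_Icc] at hi hni
        rw [h3 i (s - 1) (by omega) (by omega), mul_zero]
    rw [hsub, show Icc (s - 1) n = insert (s - 1) (Icc s n) by
        ext x; simp only [mem_insert, mem_Icc]; omega,
      Finset.sum_insert (by simp only [mem_Icc]; omega)]
    congr 1
    rw [hdiag (s - 1) (by omega), mul_one,
      show n + 1 - (s - 1) = n - s + 2 by omega]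
  have e2 : ∑ j ∈ Icc s n, (Nat.factorial (n + 1 - j) : ℤ) * (t j (s - 1) - t j s)
      = (∑ j ∈ Icc s n, (Nat.factorial (n + 1 - j) : ℤ) * t j (s - 1))
        - ∑ j ∈ Icc s n, (Nat.factorial (n + 1 - j) : ℤ) * t j s := by
    rw [← Finset.sum_sub_distrib]
    exact Finset.sum_congr rfl fun j _ => by ring
  rw [e2]
  rw [eL, eR] at e1
  linarith
end

section
/- The number of indecomposable permutations of {1,…,n} (permutations with exactly one component), for n ≥ 2, equals n! + (−1)^{n−1} + Σ_{k=1}^{n−2} (−1)^k Σ_{j=1}^{n−k−1} C(k+1, j) (n−k−1+j)! Σ over compositions (s_1,…,s_j) with each s_i ≥ 2 and s_1+⋯+s_j = n−k−1+j of the reciprocal of the multinomial coefficient (n−k−1+j choose s_1,…,s_j). -/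
open Finset

/-- The compositions `(s_1,…,s_j)` of `m` with each part `≥ 2`. -/
def comps (j m : ℕ) : Finset (Fin j → ℕ) :=
  (Fintype.piFinset fun _ : Fin j => Finset.range (m + 1)).filter
    (fun f => (∀ i, 2 ≤ f i) ∧ ∑ i, f i = m)

def pcomps (r n : ℕ) : Finset (Fin r → ℕ) :=
  (Fintype.piFinset fun _ : Fin r => Finset.range (n + 1)).filter
    (fun f => (∀ i, 1 ≤ f i) ∧ ∑ i, f i = n)

lemma mem_pcomps {r n : ℕ} {f : Fin r → ℕ} :
    f ∈ pcomps r n ↔ (∀ i, 1 ≤ f i) ∧ ∑ i, f i = n := by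
  constructor
  · intro h; exact (Finset.mem_filter.1 h).2
  · intro h
    refine Finset.mem_filter.2 ⟨Fintype.mem_piFinset.2 fun i => ?_, h⟩
    refine Finset.mem_range.2 (Nat.lt_succ_of_le ?_)
    exact h.2 ▸ Finset.single_le_sum (fun i _ => Nat.zero_le _) (mem_univ i)

lemma mem_comps {j m : ℕ} {f : Fin j → ℕ} :
    f ∈ comps j m ↔ (∀ i, 2 ≤ f i) ∧ ∑ i, f i = m := by
  constructor
  · intro h; exact (Finset.mem_filter.1 h).2
  · intro h
    refine Finset.mem_filter.2 ⟨Fintype.mem_piFinset.2 fun i => ?_, h⟩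
    refine Finset.mem_range.2 (Nat.lt_succ_of_le ?_)
    exact h.2 ▸ Finset.single_le_sum (fun i _ => Nat.zero_le _) (mem_univ i)

noncomputable def cc (r n : ℕ) : ℝ := ∑ f ∈ pcomps r n, ∏ i, (Nat.factorial (f i) : ℝ)
noncomputable def dd (j m : ℕ) : ℝ := ∑ f ∈ comps j m, ∏ i, (Nat.factorial (f i) : ℝ)

lemma cc_one {n : ℕ} (hn : 1 ≤ n) : cc 1 n = (Nat.factorial n : ℝ) := by
  have h : pcomps 1 n = {fun _ => n} := by
    ext f
    rw [mem_pcomps, Finset.mem_singleton]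
    constructor
    · rintro ⟨h1, h2⟩
      funext i
      have : i = 0 := Subsingleton.elim _ _
      subst this
      simpa [Fin.sum_univ_one] using h2
    · rintro rfl
      exact ⟨fun i => hn, by simp⟩
  simp [cc, h]

lemma cc_self {n : ℕ} : cc n n = 1 := by
  have h : pcomps n n = {fun _ => 1} := by
    ext f
    rw [mem_pcomps, Finset.mem_singleton]
    constructor
    · rintro ⟨h1, h2⟩
      funext i
      have hsum : ∑ i : Fin n, f i = ∑ i : Fin n, ((f i - 1) + 1) := by
        apply Finset.sum_congr rfl
        intro i _
        have := h1 i
        omega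
      rw [Finset.sum_add_distrib] at hsum
      simp only [Finset.sum_const, Finset.card_univ, Fintype.card_fin, smul_eq_mul,
        mul_one] at hsum
      have hz : ∑ i : Fin n, (f i - 1) = 0 := by omega
      have := (Finset.sum_eq_zero_iff).1 hz i (mem_univ i)
      have := h1 i
      omega
    · rintro rfl
      exact ⟨fun i => le_refl 1, by simp⟩
  simp [cc, h]

lemma pcomps_empty {r n : ℕ} (h : n < r) : pcomps r n = ∅ := by
  rw [Finset.eq_empty_iff_forall_notMem]
  intro f hf
  rw [mem_pcomps] at hf
  have : (r : ℕ) ≤ ∑ i : Fin r, f i := by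
    calc (r : ℕ) = ∑ _i : Fin r, 1 := by simp
    _ ≤ ∑ i : Fin r, f i := Finset.sum_le_sum fun i _ => hf.1 i
  omega

lemma cc_zero {r n : ℕ} (h : n < r) : cc r n = 0 := by
  simp [cc, pcomps_empty h]

lemma comps_empty {j m : ℕ} (h : m < 2 * j) : comps j m = ∅ := by
  rw [Finset.eq_empty_iff_forall_notMem]
  intro f hf
  rw [mem_comps] at hf
  have : 2 * j ≤ ∑ i : Fin j, f i := by
    calc 2 * j = ∑ _i : Fin j, 2 := by simp [mul_comm]
    _ ≤ ∑ i : Fin j, f i := Finset.sum_le_sum fun i _ => hf.1 i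
  omega

lemma comps_zero_empty {m : ℕ} (h : 1 ≤ m) : comps 0 m = ∅ := by
  rw [Finset.eq_empty_iff_forall_notMem]
  intro f hf
  rw [mem_comps] at hf
  simp at hf
  omega

lemma cc_rec {r n : ℕ} (hr : 1 ≤ r) :
    cc (r + 1) n = ∑ j ∈ Finset.Icc 1 (n - 1), (Nat.factorial (n - j) : ℝ) * cc r j := by
  unfold cc
  simp_rw [Finset.mul_sum]
  rw [Finset.sum_sigma' (Finset.Icc 1 (n-1)) (fun j => pcomps r j)
    (fun j g => (Nat.factorial (n - j) : ℝ) * ∏ i, (Nat.factorial (g i) : ℝ))]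
  symm
  apply Finset.sum_nbij' (i := fun p => Fin.snoc p.2 (n - p.1))
      (j := fun f => ⟨∑ i : Fin r, f i.castSucc, fun i => f i.castSucc⟩)
  · rintro ⟨j, g⟩ hp
    rw [Finset.mem_sigma] at hp
    obtain ⟨hj, hg⟩ := hp
    rw [Finset.mem_Icc] at hj
    rw [mem_pcomps] at hg
    dsimp only at hj hg ⊢
    obtain ⟨hg1, hg2⟩ := hg
    rw [mem_pcomps]
    constructor
    · intro i
      refine Fin.lastCases ?_ ?_ i
      · rw [Fin.snoc_last]; omega
      · intro i; rw [Fin.snoc_castSucc]; exact hg1 i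
    · rw [Fin.sum_univ_castSucc]
      simp only [Fin.snoc_castSucc, Fin.snoc_last]
      rw [hg2]; omega
  · intro f hf
    rw [mem_pcomps] at hf
    rw [Finset.mem_sigma]
    dsimp only
    have hsum : ∑ i : Fin r, f i.castSucc + f (Fin.last r) = n := by
      rw [← Fin.sum_univ_castSucc]; exact hf.2
    have hlow : (r:ℕ) ≤ ∑ i : Fin r, f i.castSucc := by
      calc (r:ℕ) = ∑ _i : Fin r, 1 := by simp
      _ ≤ _ := Finset.sum_le_sum fun i _ => hf.1 i.castSucc
    have hlast := hf.1 (Fin.last r)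
    rw [Finset.mem_Icc]
    exact ⟨⟨by omega, by omega⟩, mem_pcomps.2 ⟨fun i => hf.1 i.castSucc, rfl⟩⟩
  · rintro ⟨j, g⟩ hp
    rw [Finset.mem_sigma] at hp
    obtain ⟨hj, hg⟩ := hp
    rw [Finset.mem_Icc] at hj
    rw [mem_pcomps] at hg
    dsimp only at hj hg ⊢
    refine Sigma.ext ?_ ?_
    · simp only [Fin.snoc_castSucc]
      exact hg.2
    · simp only [Fin.snoc_castSucc]
      rfl
  · intro f hf
    rw [mem_pcomps] at hf
    dsimp only
    have hsum : ∑ i : Fin r, f i.castSucc + f (Fin.last r) = n := by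
      rw [← Fin.sum_univ_castSucc]; exact hf.2
    funext i
    refine Fin.lastCases ?_ ?_ i
    · rw [Fin.snoc_last]; omega
    · intro i; rw [Fin.snoc_castSucc]
  · rintro ⟨j, g⟩ hp
    rw [Finset.mem_sigma] at hp
    obtain ⟨hj, hg⟩ := hp
    dsimp only
    rw [Fin.prod_univ_castSucc]
    simp only [Fin.snoc_castSucc, Fin.snoc_last]
    ring
lemma Icc_one_eq_insert {n : ℕ} (hn : 1 ≤ n) :
    Finset.Icc 1 n = insert 1 (Finset.Icc 2 n) := by
  ext x
  simp only [Finset.mem_Icc, Finset.mem_insert]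
  omega

lemma t_expand (t : ℕ → ℝ)
    (h1 : ∀ n : ℕ, 1 ≤ n →
      t n = (Nat.factorial n : ℝ) -
        ∑ j ∈ Finset.Icc 1 (n - 1), (Nat.factorial (n - j) : ℝ) * t j) :
    ∀ n : ℕ, 1 ≤ n → t n = ∑ r ∈ Finset.Icc 1 n, (-1 : ℝ) ^ (r - 1) * cc r n := by
  intro n
  induction n using Nat.strong_induction_on with
  | _ n ih =>
    intro hn
    rw [h1 n hn]
    have step1 : ∀ j ∈ Finset.Icc 1 (n - 1),
        (Nat.factorial (n - j) : ℝ) * t j =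
        ∑ r ∈ Finset.Icc 1 (n - 1), (Nat.factorial (n - j) : ℝ) * ((-1 : ℝ) ^ (r - 1) * cc r j) := by
      intro j hj
      rw [Finset.mem_Icc] at hj
      rw [ih j (by omega) (by omega), Finset.mul_sum]
      apply Finset.sum_subset
      · apply Finset.Icc_subset_Icc_right; omega
      · intro r hr hr'
        rw [Finset.mem_Icc] at hr hr'
        have : cc r j = 0 := cc_zero (by omega)
        rw [this]; ring
    rw [Finset.sum_congr rfl step1, Finset.sum_comm]
    have step2 : ∀ r ∈ Finset.Icc 1 (n - 1),
        ∑ j ∈ Finset.Icc 1 (n - 1), (Nat.factorial (n - j) : ℝ) * ((-1 : ℝ) ^ (r - 1) * cc r j) =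
        (-1 : ℝ) ^ (r - 1) * cc (r + 1) n := by
      intro r hr
      rw [Finset.mem_Icc] at hr
      rw [cc_rec hr.1, Finset.mul_sum]
      apply Finset.sum_congr rfl
      intro j _
      ring
    rw [Finset.sum_congr rfl step2]
    have step3 : ∑ r ∈ Finset.Icc 1 (n - 1), (-1 : ℝ) ^ (r - 1) * cc (r + 1) n =
        ∑ r ∈ Finset.Icc 2 n, (-1 : ℝ) ^ r * cc r n := by
      apply Finset.sum_nbij' (i := fun r => r + 1) (j := fun r => r - 1)
      · intro a ha; rw [Finset.mem_Icc] at ha ⊢; omega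
      · intro a ha; rw [Finset.mem_Icc] at ha ⊢; omega
      · intro a ha; rw [Finset.mem_Icc] at ha; omega
      · intro a ha; rw [Finset.mem_Icc] at ha; omega
      · intro a ha; rw [Finset.mem_Icc] at ha
        have h2 : a - 1 + 2 = a + 1 := by omega
        rw [← h2, pow_add]
        ring
    rw [step3, Icc_one_eq_insert hn, Finset.sum_insert (by simp)]
    rw [cc_one hn]
    have step4 : ∀ r ∈ Finset.Icc 2 n,
        (-1 : ℝ) ^ (r - 1) * cc r n = -((-1 : ℝ) ^ r * cc r n) := by
      intro r hr
      rw [Finset.mem_Icc] at hr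
      have h2 : r - 1 + 1 = r := by omega
      have h3 : (-1 : ℝ) ^ (r - 1) * (-1) = (-1 : ℝ) ^ r := by
        rw [← pow_succ, h2]
      rw [← h3]; ring
    rw [Finset.sum_congr rfl step4, Finset.sum_neg_distrib]
    ring
lemma sum_fin_of_card {M : Type*} [AddCommMonoid M] {r j : ℕ} {S : Finset (Fin r)}
    (hS : S.card = j) (F : Fin r → M) :
    ∑ i : Fin j, F (S.orderIsoOfFin hS i) = ∑ x ∈ S, F x := by
  rw [← Finset.sum_coe_sort S F]
  exact Fintype.sum_equiv (S.orderIsoOfFin hS).toEquiv _ _ (fun i => rfl)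

lemma prod_fin_of_card {M : Type*} [CommMonoid M] {r j : ℕ} {S : Finset (Fin r)}
    (hS : S.card = j) (F : Fin r → M) :
    ∏ i : Fin j, F (S.orderIsoOfFin hS i) = ∏ x ∈ S, F x := by
  rw [← Finset.prod_coe_sort S F]
  exact Fintype.prod_equiv (S.orderIsoOfFin hS).toEquiv _ _ (fun i => rfl)

lemma fiber_sum {r n j : ℕ} (hrn : r ≤ n) {S : Finset (Fin r)} (hS : S.card = j) :
    ∑ f ∈ (pcomps r n).filter (fun f => Finset.univ.filter (fun i => 2 ≤ f i) = S),
      ∏ i, (Nat.factorial (f i) : ℝ) = dd j (n - r + j) := by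
  have hjr : j ≤ r := hS ▸ (Finset.card_le_card (Finset.subset_univ S)).trans
    (by rw [Finset.card_univ, Fintype.card_fin])
  set e := S.orderIsoOfFin hS with he
  unfold dd
  apply Finset.sum_nbij' (i := fun f => fun i : Fin j => f (e i))
    (j := fun g => fun x : Fin r => if hx : x ∈ S then g (e.symm ⟨x, hx⟩) else 1)
  · -- forward membership
    intro f hf
    rw [Finset.mem_filter] at hf
    obtain ⟨hf1, hf2⟩ := hf
    rw [mem_pcomps] at hf1
    have hbig : ∀ x, x ∈ S ↔ 2 ≤ f x := by
      intro x
      rw [← hf2, Finset.mem_filter]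
      simp
    have hoff : ∀ x ∈ Sᶜ, f x = 1 := by
      intro x hx
      rw [Finset.mem_compl] at hx
      have h2 := (not_iff_not.2 (hbig x)).1 hx
      have := hf1.1 x
      omega
    have hsplit : ∑ x ∈ S, f x + (r - j) = n := by
      have h1 : ∑ x ∈ S, f x + ∑ x ∈ Sᶜ, f x = ∑ x, f x := Finset.sum_add_sum_compl S f
      have h2 : ∑ x ∈ Sᶜ, f x = r - j := by
        rw [Finset.sum_congr rfl hoff]
        simp [Finset.card_compl, hS]
      rw [h2, hf1.2] at h1
      exact h1
    rw [mem_comps]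
    constructor
    · intro i
      exact (hbig (e i)).1 (e i).2
    · rw [sum_fin_of_card hS f]
      omega
  · -- backward membership
    intro g hg
    rw [mem_comps] at hg
    rw [Finset.mem_filter]
    constructor
    · rw [mem_pcomps]
      constructor
      · intro x
        by_cases hx : x ∈ S
        · rw [dif_pos hx]
          exact le_trans (by norm_num) (hg.1 _)
        · rw [dif_neg hx]
      · have hsum1 : ∑ x ∈ S, (if hx : x ∈ S then g (e.symm ⟨x, hx⟩) else 1) =
            ∑ i : Fin j, g i := by
          rw [← Finset.sum_coe_sort S]
          rw [Fintype.sum_equiv e.symm.toEquiv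
            (fun x : {x // x ∈ S} => if hx : (x : Fin r) ∈ S then g (e.symm ⟨x, hx⟩) else 1)
            (fun i => g i) ?_]
          intro x
          rw [dif_pos x.2]
          rfl
        have hsum2 : ∑ x ∈ Sᶜ, (if hx : x ∈ S then g (e.symm ⟨x, hx⟩) else 1) = r - j := by
          rw [Finset.sum_congr rfl (fun x hx => dif_neg (Finset.mem_compl.1 hx))]
          simp [Finset.card_compl, hS]
        have h1 := Finset.sum_add_sum_compl S
          (fun x => if hx : x ∈ S then g (e.symm ⟨x, hx⟩) else 1)
        rw [hsum1, hsum2, hg.2] at h1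
        rw [← h1]
        have h2j : 2 * j ≤ n - r + j := by
          have : 2 * j ≤ ∑ i : Fin j, g i := by
            calc 2 * j = ∑ _i : Fin j, 2 := by simp [mul_comm]
            _ ≤ _ := Finset.sum_le_sum fun i _ => hg.1 i
          omega
        omega
    · ext x
      rw [Finset.mem_filter]
      by_cases hx : x ∈ S
      · simp only [Finset.mem_univ, true_and, dif_pos hx]
        exact iff_of_true (hg.1 _) hx
      · simp only [Finset.mem_univ, true_and, dif_neg hx]
        exact iff_of_false (by omega) hx
  · -- left inverse
    intro f hf
    rw [Finset.mem_filter] at hf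
    obtain ⟨hf1, hf2⟩ := hf
    rw [mem_pcomps] at hf1
    funext x
    by_cases hx : x ∈ S
    · simp only [dif_pos hx]
      congr 1
      have : e (e.symm ⟨x, hx⟩) = ⟨x, hx⟩ := e.apply_symm_apply _
      rw [this]
    · simp only [dif_neg hx]
      have h2 : ¬ 2 ≤ f x := by
        intro h
        exact hx (hf2 ▸ Finset.mem_filter.2 ⟨Finset.mem_univ x, h⟩)
      have := hf1.1 x
      omega
  · -- right inverse
    intro g hg
    funext i
    have hm : (e i : Fin r) ∈ S := (e i).2
    simp only [dif_pos hm]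
    congr 1
    have : (⟨(e i : Fin r), hm⟩ : {x // x ∈ S}) = e i := rfl
    rw [this, e.symm_apply_apply]
  · -- values
    intro f hf
    rw [Finset.mem_filter] at hf
    obtain ⟨hf1, hf2⟩ := hf
    rw [mem_pcomps] at hf1
    rw [prod_fin_of_card hS (fun x => (Nat.factorial (f x) : ℝ))]
    rw [← Finset.prod_mul_prod_compl S (fun x => (Nat.factorial (f x) : ℝ))]
    have hoff : ∀ x ∈ Sᶜ, (Nat.factorial (f x) : ℝ) = 1 := by
      intro x hx
      rw [Finset.mem_compl] at hx
      have h2 : ¬ 2 ≤ f x := by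
        intro h
        exact hx (hf2 ▸ Finset.mem_filter.2 ⟨Finset.mem_univ x, h⟩)
      have := hf1.1 x
      have : f x = 1 := by omega
      rw [this]
      norm_num
    rw [Finset.prod_congr rfl hoff]
    simp
lemma dd_zero_parts {m : ℕ} (h : 1 ≤ m) : dd 0 m = 0 := by
  simp [dd, comps_zero_empty h]

lemma dd_small {j m : ℕ} (h : m < 2 * j) : dd j m = 0 := by
  simp [dd, comps_empty h]

lemma cc_split {r n : ℕ} (hrn : r ≤ n) :
    cc r n = ∑ j ∈ Finset.range (r + 1), (Nat.choose r j : ℝ) * dd j (n - r + j) := by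
  unfold cc
  have hfib := Finset.sum_fiberwise_of_maps_to
    (s := pcomps r n)
    (g := fun f => Finset.univ.filter (fun i => 2 ≤ f i))
    (t := (Finset.univ : Finset (Fin r)).powerset)
    (fun f _ => Finset.mem_powerset.2 (Finset.subset_univ _))
    (fun f => ∏ i, (Nat.factorial (f i) : ℝ))
  rw [← hfib]
  rw [Finset.powerset_card_disjiUnion]
  refine (Finset.sum_disjiUnion _ _ _).trans ?_
  rw [Finset.card_univ, Fintype.card_fin]
  apply Finset.sum_congr rfl
  intro j hj
  have hstep : ∀ S ∈ Finset.powersetCard j (Finset.univ : Finset (Fin r)),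
      ∑ f ∈ (pcomps r n).filter (fun f => Finset.univ.filter (fun i => 2 ≤ f i) = S),
        ∏ i, (Nat.factorial (f i) : ℝ) = dd j (n - r + j) := by
    intro S hs
    exact fiber_sum hrn (Finset.mem_powersetCard.1 hs).2
  rw [Finset.sum_congr rfl hstep, Finset.sum_const, Finset.card_powersetCard,
    Finset.card_univ, Fintype.card_fin, nsmul_eq_mul]

lemma cc_split' {r n : ℕ} (hrn : r < n) :
    cc r n = ∑ j ∈ Finset.Icc 1 (n - r), (Nat.choose r j : ℝ) * dd j (n - r + j) := by
  rw [cc_split (le_of_lt hrn)]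
  have h1 : ∑ j ∈ Finset.range (r + 1), (Nat.choose r j : ℝ) * dd j (n - r + j) =
      ∑ j ∈ Finset.range (n + 1), (Nat.choose r j : ℝ) * dd j (n - r + j) := by
    apply Finset.sum_subset
    · intro x hx
      rw [Finset.mem_range] at hx ⊢
      omega
    · intro x hx hx'
      rw [Finset.mem_range] at hx hx'
      have : Nat.choose r x = 0 := Nat.choose_eq_zero_of_lt (by omega)
      rw [this]
      norm_num
  have h2 : ∑ j ∈ Finset.Icc 1 (n - r), (Nat.choose r j : ℝ) * dd j (n - r + j) =
      ∑ j ∈ Finset.range (n + 1), (Nat.choose r j : ℝ) * dd j (n - r + j) := by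
    apply Finset.sum_subset
    · intro x hx
      rw [Finset.mem_Icc] at hx
      rw [Finset.mem_range]
      omega
    · intro x hx hx'
      rw [Finset.mem_range] at hx
      rw [Finset.mem_Icc] at hx'
      rcases Nat.eq_zero_or_pos x with h0 | h0
      · subst h0
        rw [dd_zero_parts (by omega)]
        norm_num
      · have hbig : n - r < x := by omega
        rw [dd_small (by omega)]
        norm_num
  rw [h1, ← h2]

lemma dd_eq_multinomial (j m : ℕ) :
    (Nat.factorial m : ℝ) * ∑ f ∈ comps j m, 1 / (Nat.multinomial Finset.univ f : ℝ) =
      dd j m := by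
  rw [Finset.mul_sum]
  unfold dd
  apply Finset.sum_congr rfl
  intro f hf
  have hm := mem_comps.1 hf
  have hspec := Nat.multinomial_spec (Finset.univ : Finset (Fin j)) f
  rw [hm.2] at hspec
  have hpos := Nat.multinomial_pos (Finset.univ : Finset (Fin j)) f
  have hne : (Nat.multinomial Finset.univ f : ℝ) ≠ 0 := by
    exact_mod_cast hpos.ne'
  have hcast : (∏ i, (Nat.factorial (f i) : ℝ)) * (Nat.multinomial Finset.univ f : ℝ)
      = (Nat.factorial m : ℝ) := by
    exact_mod_cast hspec
  field_simp
  linarith [hcast]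

/-- Closed form for the number `t n` of indecomposable permutations of `{1,…,n}` (permutations
with exactly one component), `n ≥ 2`:
`t n = n! + (-1)^(n-1) + Σ_{k=1}^{n-2} (-1)^k Σ_{j=1}^{n-k-1} C(k+1,j) (n-k-1+j)!
  Σ_{(s_1,…,s_j) comp. of n-k-1+j, s_i ≥ 2} 1/(n-k-1+j choose s_1,…,s_j)`. -/
theorem indecomposable_closed_form
    (t : ℕ → ℝ)
    (h1 : ∀ n : ℕ, 1 ≤ n →
      t n = (Nat.factorial n : ℝ) -
        ∑ j ∈ Finset.Icc 1 (n - 1), (Nat.factorial (n - j) : ℝ) * t j) :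
    ∀ n : ℕ, 2 ≤ n →
      t n = (Nat.factorial n : ℝ) + (-1 : ℝ) ^ (n - 1) +
        ∑ k ∈ Finset.Icc 1 (n - 2), (-1 : ℝ) ^ k *
          ∑ j ∈ Finset.Icc 1 (n - k - 1),
            (Nat.choose (k + 1) j : ℝ) * (Nat.factorial (n - k - 1 + j) : ℝ) *
              ∑ f ∈ comps j (n - k - 1 + j),
                1 / (Nat.multinomial Finset.univ f : ℝ) := by
  intro n hn
  rw [t_expand t h1 n (by omega)]
  have hsplit : Finset.Icc 1 n = insert 1 (insert n (Finset.Icc 2 (n - 1))) := by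
    ext x
    simp only [Finset.mem_Icc, Finset.mem_insert]
    omega
  rw [hsplit,
    Finset.sum_insert (by simp only [Finset.mem_insert, Finset.mem_Icc]; omega),
    Finset.sum_insert (by simp only [Finset.mem_Icc]; omega)]
  rw [cc_one (by omega), cc_self]
  have hmid : ∑ k ∈ Finset.Icc 1 (n - 2), (-1 : ℝ) ^ k *
          ∑ j ∈ Finset.Icc 1 (n - k - 1),
            (Nat.choose (k + 1) j : ℝ) * (Nat.factorial (n - k - 1 + j) : ℝ) *
              ∑ f ∈ comps j (n - k - 1 + j),
                1 / (Nat.multinomial Finset.univ f : ℝ) =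
      ∑ r ∈ Finset.Icc 2 (n - 1), (-1 : ℝ) ^ (r - 1) * cc r n := by
    apply Finset.sum_nbij' (i := fun k => k + 1) (j := fun r => r - 1)
    · intro a ha; rw [Finset.mem_Icc] at ha ⊢; omega
    · intro a ha; rw [Finset.mem_Icc] at ha ⊢; omega
    · intro a ha; rw [Finset.mem_Icc] at ha; omega
    · intro a ha; rw [Finset.mem_Icc] at ha; omega
    · intro k hk
      rw [Finset.mem_Icc] at hk
      have hs : k + 1 - 1 = k := by omega
      rw [hs, cc_split' (show k + 1 < n by omega)]
      have hsub : n - (k + 1) = n - k - 1 := by omega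
      rw [hsub]
      congr 1
      apply Finset.sum_congr rfl
      intro j _
      rw [mul_assoc, dd_eq_multinomial]
  rw [hmid]
  norm_num
  ring
end

section
/- Let λ > μ > 0 and α > 0. The function f(t) = α (λ−μ)^{α/λ+1} e^{(λ−μ)t} / (λ e^{(λ−μ)t} − μ)^{α/λ+1} on (0,∞) is a probability density function, i.e., f(t) ≥ 0 for all t > 0 and ∫_0^∞ f(t) dt = 1, with cumulative distribution function F(t) = 1 − ((λ−μ)/(λ e^{(λ−μ)t} − μ))^{α/λ}. -/
open MeasureTheory Real

/-- For `λ > μ > 0` and `α > 0`, the function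
`f(t) = α (λ-μ)^{α/λ+1} e^{(λ-μ)t} / (λ e^{(λ-μ)t} - μ)^{α/λ+1}` is a probability density
on `(0,∞)`, with cumulative distribution function
`F(t) = 1 - ((λ-μ)/(λ e^{(λ-μ)t} - μ))^{α/λ}`. -/
theorem density_lambda_gt_mu (l m a : ℝ) (hm : 0 < m) (hml : m < l) (ha : 0 < a) :
    (∀ t : ℝ, 0 < t →
      0 ≤ a * (l - m) ^ (a / l + 1) * Real.exp ((l - m) * t) /
            (l * Real.exp ((l - m) * t) - m) ^ (a / l + 1)) ∧
    (∫ t in Set.Ioi (0 : ℝ),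
        a * (l - m) ^ (a / l + 1) * Real.exp ((l - m) * t) /
          (l * Real.exp ((l - m) * t) - m) ^ (a / l + 1)) = 1 ∧
    (∀ t : ℝ, 0 < t →
      (∫ u in Set.Ioc (0 : ℝ) t,
          a * (l - m) ^ (a / l + 1) * Real.exp ((l - m) * u) /
            (l * Real.exp ((l - m) * u) - m) ^ (a / l + 1)) =
        1 - ((l - m) / (l * Real.exp ((l - m) * t) - m)) ^ (a / l)) := by
  have hl : 0 < l := hm.trans hml
  have hc : 0 < l - m := sub_pos.mpr hml
  set c : ℝ := l - m with hcdef
  -- positivity of the denominator base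
  have hg : ∀ t : ℝ, 0 ≤ t → 0 < l * Real.exp (c * t) - m := by
    intro t ht
    have h1 : (1:ℝ) ≤ Real.exp (c * t) := Real.one_le_exp (by positivity)
    nlinarith
  -- nonnegativity of the density
  have hnonneg : ∀ t : ℝ, 0 ≤ t →
      0 ≤ a * c ^ (a / l + 1) * Real.exp (c * t) /
            (l * Real.exp (c * t) - m) ^ (a / l + 1) := by
    intro t ht
    have hu := hg t ht
    have h1 : 0 < (l * Real.exp (c * t) - m) ^ (a / l + 1) := Real.rpow_pos_of_pos hu _
    have h2 : 0 < c ^ (a / l + 1) := Real.rpow_pos_of_pos hc _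
    positivity
  -- the antiderivative
  set F : ℝ → ℝ := fun t => -(c ^ (a / l) * (l * Real.exp (c * t) - m) ^ (-(a / l)))
    with hFdef
  have hderiv : ∀ x : ℝ, 0 ≤ x →
      HasDerivAt F
        (a * c ^ (a / l + 1) * Real.exp (c * x) /
          (l * Real.exp (c * x) - m) ^ (a / l + 1)) x := by
    intro x hx
    have hu := hg x hx
    have h1 : HasDerivAt (fun t : ℝ => l * Real.exp (c * t) - m)
        (l * (Real.exp (c * x) * c)) x := by
      have hid : HasDerivAt (fun t : ℝ => c * t) c x := by
        simpa using (hasDerivAt_id x).const_mul c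
      exact ((hid.exp).const_mul l).sub_const m
    have h2 := ((h1.rpow_const (p := -(a / l)) (Or.inl hu.ne')).const_mul
      (c ^ (a / l))).neg
    convert h2 using 1
    case e'_4 => rfl
    case e'_5 => rfl
    case e'_8 => rfl
    have e1 : c ^ (a / l + 1) = c ^ (a / l) * c := Real.rpow_add_one hc.ne' _
    have e2 : (-(a / l) - 1 : ℝ) = -(a / l + 1) := by ring
    have e3 : (l * Real.exp (c * x) - m) ^ (-(a / l + 1))
        = ((l * Real.exp (c * x) - m) ^ (a / l + 1))⁻¹ := Real.rpow_neg hu.le _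
    have hden : (l * Real.exp (c * x) - m) ^ (a / l + 1) ≠ 0 :=
      (Real.rpow_pos_of_pos hu _).ne'
    rw [e1, e2, e3]
    field_simp
  -- tendsto of F at infinity
  have htend : Filter.Tendsto F Filter.atTop (nhds 0) := by
    have h1 : Filter.Tendsto (fun t : ℝ => l * Real.exp (c * t) - m)
        Filter.atTop Filter.atTop := by
      have h2 : Filter.Tendsto (fun t : ℝ => c * t) Filter.atTop Filter.atTop :=
        Filter.Tendsto.const_mul_atTop hc Filter.tendsto_id
      have h3 := (Real.tendsto_exp_atTop.comp h2).const_mul_atTop hl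
      simpa [sub_eq_add_neg] using Filter.tendsto_atTop_add_const_right _ (-m) h3
    have h4 : Filter.Tendsto (fun x : ℝ => x ^ (-(a / l))) Filter.atTop (nhds 0) :=
      tendsto_rpow_neg_atTop (by positivity)
    have h5 := ((h4.comp h1).const_mul (c ^ (a / l))).neg
    simpa using h5
  have hF0 : F 0 = -1 := by
    simp only [hFdef, mul_zero, Real.exp_zero, mul_one]
    rw [Real.rpow_neg hc.le, ← Real.rpow_neg hc.le, ← Real.rpow_add hc]
    simp
  refine ⟨fun t ht => hnonneg t ht.le, ?_, ?_⟩
  · have := integral_Ioi_of_hasDerivAt_of_nonneg' (g := F)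
      (fun x hx => hderiv x hx) (fun x hx => hnonneg x (le_of_lt hx)) htend
    rw [this, hF0]; ring
  · intro t ht
    have hFt : ∫ u in (0:ℝ)..t,
        a * c ^ (a / l + 1) * Real.exp (c * u) /
          (l * Real.exp (c * u) - m) ^ (a / l + 1) = F t - F 0 := by
      apply intervalIntegral.integral_eq_sub_of_hasDerivAt
      · intro x hx
        rw [Set.uIcc_of_le ht.le] at hx
        exact hderiv x hx.1
      · apply ContinuousOn.intervalIntegrable
        have hb : ContinuousOn (fun u : ℝ => l * Real.exp (c * u) - m) (Set.uIcc 0 t) := by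
          fun_prop
        apply ContinuousOn.div
        · fun_prop
        · exact hb.rpow_const fun x hx => Or.inl (by
            rw [Set.uIcc_of_le ht.le] at hx
            exact (hg x hx.1).ne')
        · intro x hx
          rw [Set.uIcc_of_le ht.le] at hx
          exact (Real.rpow_pos_of_pos (hg x hx.1) _).ne'
    rw [← intervalIntegral.integral_of_le ht.le, hFt, hF0]
    have hu := hg t ht.le
    rw [Real.div_rpow hc.le hu.le]
    simp only [hFdef]
    rw [Real.rpow_neg hu.le, div_eq_mul_inv]
    ring
end

section
/- Let λ > μ > 0 and α > 0. Then the Laplace transform ∫_0^∞ e^{−st} ((λ−μ)/(λe^{(λ−μ)t} − μ))^{α/λ} dt equals λ((λ−μ)/λ)^{α/λ}/(λs + (λ−μ)α) · ₂F₁(α/λ, α/λ + s/(λ−μ); 1 + α/λ + s/(λ−μ); μ/λ), for all s > 0. -/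
open MeasureTheory Real

/-- Rising factorial (Pochhammer symbol) `(a)_n`. -/
noncomputable def poch (a : ℝ) (n : ℕ) : ℝ := ∏ i ∈ Finset.range n, (a + i)



lemma poch_zero (a : ℝ) : poch a 0 = 1 := by simp [poch]

lemma poch_succ (a : ℝ) (n : ℕ) : poch a (n + 1) = poch a n * (a + n) :=
  Finset.prod_range_succ _ _

lemma poch_pos {a : ℝ} (ha : 0 < a) (n : ℕ) : 0 < poch a n :=
  Finset.prod_pos fun i _ => by positivity

lemma poch_one_add (c : ℝ) (n : ℕ) : poch (1 + c) n * c = poch c n * (c + n) := by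
  induction n with
  | zero => simp [poch_zero]
  | succ n ih =>
    rw [poch_succ, poch_succ]
    push_cast
    linear_combination (1 + c + (n:ℝ)) * ih

/-- Summability of `n^k * poch ν n / n! * c^n` for `0 ≤ c < 1`. -/
lemma summable_poch_mul {ν c : ℝ} (hν : 0 < ν) (hc0 : 0 ≤ c) (hc1 : c < 1) (k : ℕ) :
    Summable fun n : ℕ => (n : ℝ) ^ k * (poch ν n / n.factorial) * c ^ n := by
  rcases eq_or_lt_of_le hc0 with h | hc0
  · apply summable_of_ne_finset_zero (s := {0})
    intro n hn
    simp only [Finset.mem_singleton] at hn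
    rw [← h, zero_pow hn]
    ring
  set r : ℝ := (c + 1) / 2 with hr
  have hcr : c < r := by rw [hr]; linarith
  have hr1 : r < 1 := by rw [hr]; linarith
  have hr0 : 0 < r := lt_trans hc0 hcr
  apply summable_of_ratio_norm_eventually_le hr1
  have t1 : Filter.Tendsto (fun n : ℕ => ((n : ℝ) + 1) / n) Filter.atTop (nhds 1) := by
    have h0 : Filter.Tendsto (fun n : ℕ => 1 + 1 / (n : ℝ)) Filter.atTop (nhds (1 + 0)) :=
      (tendsto_const_nhds.add tendsto_one_div_atTop_nhds_zero_nat)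
    rw [add_zero] at h0
    apply h0.congr'
    filter_upwards [Filter.eventually_ge_atTop 1] with n hn
    have hn0 : ((n : ℝ)) ≠ 0 := by positivity
    field_simp
  have t2 : Filter.Tendsto (fun n : ℕ => (ν + n) / ((n : ℝ) + 1)) Filter.atTop (nhds 1) := by
    have h0 : Filter.Tendsto (fun n : ℕ => 1 + (ν - 1) / ((n : ℝ) + 1)) Filter.atTop (nhds (1 + 0)) := by
      refine tendsto_const_nhds.add (Filter.Tendsto.div_atTop tendsto_const_nhds ?_)
      exact Filter.tendsto_atTop_add_const_right _ _ tendsto_natCast_atTop_atTop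
    rw [add_zero] at h0
    apply h0.congr
    intro n
    have : ((n : ℝ) + 1) ≠ 0 := by positivity
    field_simp
    ring
  have hten : Filter.Tendsto (fun n : ℕ => (((n : ℝ) + 1) / n) ^ k * ((ν + n) / ((n : ℝ) + 1)) * c)
      Filter.atTop (nhds c) := by
    have := ((t1.pow k).mul t2).mul_const c
    simpa using this
  have hev : ∀ᶠ n : ℕ in Filter.atTop,
      (((n : ℝ) + 1) / n) ^ k * ((ν + n) / ((n : ℝ) + 1)) * c < r :=
    hten.eventually_lt_const hcr
  rw [Filter.eventually_atTop] at hev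
  obtain ⟨N, hN⟩ := hev
  filter_upwards [Filter.eventually_ge_atTop (max N 1)] with n hn
  have hn1 : 1 ≤ n := le_trans (le_max_right N 1) hn
  have hkey : ((n : ℝ) + 1) ^ k * (ν + n) * c ≤ r * (n : ℝ) ^ k * (n + 1) := by
    have hlt := hN n (le_trans (le_max_left N 1) hn)
    have hn0 : (0 : ℝ) < n := by exact_mod_cast hn1
    have expand : (((n : ℝ) + 1) / n) ^ k * ((ν + n) / ((n : ℝ) + 1)) * c * ((n : ℝ) ^ k * (n + 1))
        = ((n : ℝ) + 1) ^ k * (ν + n) * c := by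
      rw [div_pow]
      field_simp
    have h3 := mul_le_mul_of_nonneg_right hlt.le (show (0:ℝ) ≤ (n : ℝ) ^ k * (n + 1) by positivity)
    rw [expand] at h3
    nlinarith [h3]
  have hp := (poch_pos hν n).le
  have hp1 := (poch_pos hν (n+1)).le
  have hpos : (0:ℝ) < poch ν n / n.factorial * c ^ n :=
    mul_pos (div_pos (poch_pos hν n) (by positivity)) (by positivity)
  have Hn : 0 ≤ (n:ℝ)^k * (poch ν n / n.factorial) * c^n :=
    mul_nonneg (mul_nonneg (by positivity) (div_nonneg hp (by positivity))) (by positivity)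
  have Hn1 : 0 ≤ ((n+1:ℕ):ℝ)^k * (poch ν (n+1) / (n+1).factorial) * c^(n+1) :=
    mul_nonneg (mul_nonneg (by positivity) (div_nonneg hp1 (by positivity))) (by positivity)
  rw [Real.norm_eq_abs, Real.norm_eq_abs, abs_of_nonneg Hn1, abs_of_nonneg Hn]
  rw [poch_succ]
  push_cast
  have hfact : ((n+1).factorial : ℝ) = (n.factorial : ℝ) * (n + 1) := by push_cast [Nat.factorial_succ]; ring
  rw [hfact]
  have h1 : ((n:ℝ)+1)^k * (poch ν n * (ν + n) / ((n.factorial:ℝ) * (n+1))) * (c^n * c)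
      = (((n:ℝ)+1)^k * (ν + n) * c) * (poch ν n / n.factorial * c ^ n) / (n + 1) := by
    field_simp
  rw [pow_succ, h1]
  rw [div_le_iff₀ (by positivity)]
  calc ((n:ℝ)+1)^k * (ν + n) * c * (poch ν n / n.factorial * c ^ n)
      ≤ (r * (n:ℝ)^k * (n+1)) * (poch ν n / n.factorial * c ^ n) := by
        apply mul_le_mul_of_nonneg_right hkey (le_of_lt hpos)
    _ = r * ((n:ℝ)^k * (poch ν n / n.factorial) * c^n) * (n+1) := by ring

lemma q_succ {ν : ℝ} (n : ℕ) :
    poch ν (n+1) / (n+1).factorial * ((n:ℝ)+1) = (ν + n) * (poch ν n / n.factorial) := by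
  rw [poch_succ]
  have h1 : (((n+1).factorial : ℝ)) = (n.factorial : ℝ) * ((n:ℝ)+1) := by
    push_cast [Nat.factorial_succ]; ring
  rw [h1]
  have h2 : ((n:ℝ)+1) ≠ 0 := by positivity
  have h3 : ((n.factorial : ℝ)) ≠ 0 := by positivity
  field_simp

lemma summable_q {ν y : ℝ} (hν : 0 < ν) (hy : |y| < 1) :
    Summable fun n : ℕ => poch ν n / n.factorial * y ^ n := by
  apply Summable.of_norm
  refine (summable_poch_mul hν (abs_nonneg y) hy 0).congr fun n => ?_
  have hp := (poch_pos hν n).le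
  simp [Real.norm_eq_abs, abs_mul, abs_pow, abs_div, abs_of_nonneg hp, Nat.abs_cast]

lemma summable_nq {ν y : ℝ} (hν : 0 < ν) (hy : |y| < 1) :
    Summable fun n : ℕ => (n:ℝ) * (poch ν n / n.factorial) * y ^ n := by
  apply Summable.of_norm
  refine (summable_poch_mul hν (abs_nonneg y) hy 1).congr fun n => ?_
  have hp := (poch_pos hν n).le
  simp [Real.norm_eq_abs, abs_mul, abs_pow, abs_div, abs_of_nonneg hp, Nat.abs_cast]

/-- Binomial series: for `0 < ν` and `0 ≤ x < 1`, `∑ (ν)_n/n! x^n = (1-x)^(-ν)`. -/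
lemma hasSum_binomial {ν x : ℝ} (hν : 0 < ν) (hx0 : 0 ≤ x) (hx1 : x < 1) :
    HasSum (fun n : ℕ => poch ν n / n.factorial * x ^ n) ((1 - x) ^ (-ν) : ℝ) := by
  set c : ℝ := (1 + x) / 2 with hc
  have hxc : x < c := by rw [hc]; linarith
  have hc1 : c < 1 := by rw [hc]; linarith
  have hc0 : 0 < c := by rw [hc]; linarith
  set s : Set ℝ := Set.Ioo (-c) c with hs
  have hso : IsOpen s := isOpen_Ioo
  have hsc : IsPreconnected s := (convex_Ioo _ _).isPreconnected
  have h0s : (0:ℝ) ∈ s := by constructor <;> simp [hc0]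
  have hxs : x ∈ s := ⟨by linarith, hxc⟩
  set g : ℕ → ℝ → ℝ := fun n y => poch ν n / n.factorial * y ^ n with hg
  set g' : ℕ → ℝ → ℝ := fun n y => poch ν n / n.factorial * (n * y ^ (n-1)) with hg'
  set u : ℕ → ℝ := fun n => (n:ℝ) * (poch ν n / n.factorial) * c ^ n / c with hu
  have hu_sum : Summable u := ((summable_poch_mul hν hc0.le hc1 1).congr
    (fun n => by rw [pow_one])).div_const c
  have hderiv : ∀ n y, HasDerivAt (g n) (g' n y) y := fun n y =>
    (hasDerivAt_pow n y).const_mul _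
  have hbound : ∀ n y, y ∈ s → ‖g' n y‖ ≤ u n := by
    intro n y hy
    have hp := (poch_pos hν n).le
    have hyc : |y| ≤ c := by
      rw [abs_le]; exact ⟨hy.1.le, hy.2.le⟩
    rw [hg', Real.norm_eq_abs, abs_mul, abs_mul, abs_pow, abs_div, abs_of_nonneg hp,
      Nat.abs_cast]
    match n with
    | 0 => simp [hu]
    | (n+1) =>
      have h1 : |y| ^ (n + 1 - 1) ≤ c ^ (n + 1 - 1) :=
        pow_le_pow_left₀ (abs_nonneg y) hyc _
      have h2 : u (n+1) = ((n+1:ℕ):ℝ) * (poch ν (n+1) / (n+1).factorial) * c ^ n := by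
        simp only [hu]
        rw [pow_succ]
        field_simp
      rw [h2]
      simp only [Nat.add_sub_cancel] at h1 ⊢
      have hq : 0 ≤ poch ν (n+1) / ((n+1).factorial:ℝ) := div_nonneg (poch_pos hν _).le (by positivity)
      rw [Nat.abs_cast]
      calc poch ν (n+1) / ((n+1).factorial:ℝ) * (((n+1:ℕ):ℝ) * |y| ^ n)
          ≤ poch ν (n+1) / ((n+1).factorial:ℝ) * (((n+1:ℕ):ℝ) * c ^ n) := by
            refine mul_le_mul_of_nonneg_left ?_ hq
            exact mul_le_mul_of_nonneg_left h1 (by positivity)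
        _ = ((n+1:ℕ):ℝ) * (poch ν (n+1) / (n+1).factorial) * c ^ n := by ring
  have hg0 : Summable fun n => g n 0 := by
    apply summable_of_ne_finset_zero (s := {0})
    intro n hn
    simp only [Finset.mem_singleton] at hn
    simp [hg, zero_pow hn]
  -- S and its derivative
  set S : ℝ → ℝ := fun y => ∑' n, g n y with hS
  have hSsum : ∀ y ∈ s, Summable fun n => g n y := fun y hy =>
    summable_of_summable_hasDerivAt_of_isPreconnected hu_sum hso hsc
      (fun n z _ => hderiv n z) hbound h0s hg0 hy
  have hSderiv : ∀ y ∈ s, HasDerivAt S (∑' n, g' n y) y := fun y hy =>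
    hasDerivAt_tsum_of_isPreconnected hu_sum hso hsc (fun n z _ => hderiv n z)
      hbound h0s hg0 hy
  -- key ODE identity
  have hkey : ∀ y ∈ s, (1 - y) * (∑' n, g' n y) = ν * S y := by
    intro y hy
    have hyabs : |y| < 1 := lt_of_lt_of_le (abs_lt.mpr ⟨hy.1, hy.2⟩) hc1.le
    have hsum_q : Summable fun n : ℕ => poch ν n / n.factorial * y ^ n := summable_q hν hyabs
    have hsum_nq : Summable fun n : ℕ => (n:ℝ) * (poch ν n / n.factorial) * y ^ n :=
      summable_nq hν hyabs
    have hshift : ∀ n : ℕ, g' (n+1) y = (ν + n) * (poch ν n / n.factorial) * y ^ n := by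
      intro n
      show poch ν (n+1) / (n+1).factorial * (((n+1:ℕ):ℝ) * y ^ (n+1-1)) = _
      simp only [Nat.add_sub_cancel]
      rw [show poch ν (n+1) / (n+1).factorial * (((n+1:ℕ):ℝ) * y^n)
          = (poch ν (n+1) / (n+1).factorial * (((n:ℝ))+1)) * y^n from by push_cast; ring, q_succ]
    have hsum_shift : Summable (fun n : ℕ => (ν+n) * (poch ν n / n.factorial) * y^n) :=
      ((hsum_q.mul_left ν).add hsum_nq).congr fun n => by ring
    have hsum_g' : Summable (fun n => g' n y) := by
      rw [← summable_nat_add_iff 1]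
      exact hsum_shift.congr fun n => (hshift n).symm
    have hyS : y * (∑' n, g' n y) = ∑' n : ℕ, (n:ℝ) * (poch ν n / n.factorial) * y ^ n := by
      rw [← tsum_mul_left]
      apply tsum_congr
      intro n
      match n with
      | 0 => simp [hg']
      | (n+1) =>
        show y * (poch ν (n+1) / (n+1).factorial * (((n+1:ℕ):ℝ) * y ^ (n+1-1))) = _
        simp only [Nat.add_sub_cancel]
        push_cast
        ring
    have hA : (∑' n, g' n y) = ν * S y + y * (∑' n, g' n y) := by
      conv_lhs => rw [Summable.tsum_eq_zero_add hsum_g']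
      have h0' : g' 0 y = 0 := by simp [hg']
      rw [h0', zero_add, tsum_congr hshift, hyS]
      have hsplit : ∀ n : ℕ, (ν + n) * (poch ν n / n.factorial) * y ^ n
          = ν * (poch ν n / n.factorial * y ^ n) + (n:ℝ) * (poch ν n / n.factorial) * y ^ n :=
        fun n => by ring
      rw [tsum_congr hsplit, Summable.tsum_add (hsum_q.mul_left ν) hsum_nq, tsum_mul_left]
    linarith [hA]
  -- h := (1-y)^ν * S y is constant on s
  set h : ℝ → ℝ := fun y => (1 - y) ^ ν * S y with hh
  have hhd : ∀ y ∈ s, HasDerivAt h 0 y := by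
    intro y hy
    have hy1 : (0:ℝ) < 1 - y := by
      have := hy.2
      simp only [hs, Set.mem_Ioo] at hy
      linarith [hy.2, hc1]
    have base : HasDerivAt (fun z : ℝ => 1 - z) (-1) y := (hasDerivAt_id y).const_sub 1
    have d1 : HasDerivAt (fun z : ℝ => (1 - z) ^ ν) (-1 * ν * (1-y) ^ (ν-1)) y :=
      base.rpow_const (Or.inl (ne_of_gt hy1))
    have d2 := hSderiv y hy
    have dmul := d1.mul d2
    have hzero : -1 * ν * (1-y) ^ (ν-1) * S y + (1 - y) ^ ν * (∑' n, g' n y) = 0 := by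
      rw [show (1-y) ^ ν = (1-y) ^ (ν-1) * (1-y) from by
        rw [← Real.rpow_add_one (ne_of_gt hy1)]; ring_nf]
      linear_combination ((1-y) ^ (ν-1)) * (hkey y hy)
    rw [hzero] at dmul
    exact dmul
  have hconst : h x = h 0 := by
    apply (convex_Ioo (-c) c).is_const_of_fderivWithin_eq_zero
      (fun y hy => ((hhd y hy).differentiableAt).differentiableWithinAt)
      (fun y hy => ?_) hxs h0s
    rw [fderivWithin_of_isOpen hso hy, (hhd y hy).hasFDerivAt.fderiv]
    ext z
    simp
  have hS0 : S 0 = 1 := by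
    show (∑' n, g n 0) = 1
    rw [tsum_eq_single 0 (fun b hb => by simp [hg, zero_pow hb])]
    simp [hg, poch_zero]
  have h0val : h 0 = 1 := by
    simp only [hh, sub_zero, Real.one_rpow, one_mul, hS0]
  have hSx : S x = (1 - x) ^ (-ν) := by
    have h1x : (0:ℝ) < 1 - x := by linarith
    have hval : (1 - x) ^ ν * S x = 1 := by
      show h x = 1
      rw [hconst, h0val]
    have hne : (1 - x) ^ ν ≠ 0 := ne_of_gt (Real.rpow_pos_of_pos h1x ν)
    rw [Real.rpow_neg h1x.le]
    exact eq_inv_of_mul_eq_one_left (by linarith [hval])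
  have := (hSsum x hxs).hasSum
  rw [show (∑' n, g n x) = S x from rfl, hSx] at this
  exact this

lemma integral_exp_neg_mul_Ioi_zero {c : ℝ} (hc : 0 < c) :
    (∫ t in Set.Ioi (0:ℝ), Real.exp (-c * t)) = 1 / c := by
  have h := integral_comp_mul_left_Ioi (fun u => Real.exp (-u)) 0 hc
  simp only [mul_zero, integral_exp_neg_Ioi_zero, smul_eq_mul, mul_one] at h
  rw [show (fun t => Real.exp (-c * t)) = fun t => Real.exp (-(c * t)) from by
    funext t; ring_nf]
  rw [h]
  exact inv_eq_one_div c

/-- For `λ > μ > 0`, `α > 0` and `s > 0`, the Laplace transform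
`∫_0^∞ e^{-st} ((λ-μ)/(λe^{(λ-μ)t} - μ))^{α/λ} dt` equals
`λ((λ-μ)/λ)^{α/λ}/(λs + (λ-μ)α) ₂F₁(α/λ, α/λ+s/(λ-μ); 1+α/λ+s/(λ-μ); μ/λ)`. -/
theorem laplace_transform_hypergeom (l m a : ℝ) (hm : 0 < m) (hml : m < l) (ha : 0 < a) :
    ∀ s : ℝ, 0 < s →
      (∫ t in Set.Ioi (0 : ℝ),
          Real.exp (-s * t) * ((l - m) / (l * Real.exp ((l - m) * t) - m)) ^ (a / l)) =
        l * ((l - m) / l) ^ (a / l) / (l * s + (l - m) * a) *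
          ∑' n : ℕ,
            poch (a / l) n * poch (a / l + s / (l - m)) n /
              (poch (1 + a / l + s / (l - m)) n * (Nat.factorial n : ℝ)) * (m / l) ^ n := by

  intro s hs
  have hl : 0 < l := lt_trans hm hml
  set β : ℝ := l - m with hβdef
  have hβ : 0 < β := by simp [hβdef]; linarith
  set ν : ℝ := a / l with hνdef
  have hν : 0 < ν := div_pos ha hl
  set r : ℝ := m / l with hrdef
  have hr0 : 0 < r := div_pos hm hl
  have hr1 : r < 1 := (div_lt_one hl).mpr hml
  set σ : ℝ := s / β with hσdef
  have hσ : 0 < σ := div_pos hs hβ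
  set c : ℕ → ℝ := fun n => s + β * ν + β * n with hcdef
  have hcpos : ∀ n : ℕ, 0 < c n := by
    intro n
    have : (0:ℝ) ≤ β * n := by positivity
    simp only [hcdef]
    nlinarith [mul_pos hβ hν]
  set K : ℕ → ℝ := fun n => (β / l) ^ ν * (poch ν n / n.factorial * r ^ n) with hKdef
  have hKnn : ∀ n, 0 ≤ K n := by
    intro n
    have := (poch_pos hν n).le
    have hbl : (0:ℝ) ≤ (β/l) ^ ν := Real.rpow_nonneg (by positivity) _
    simp only [hKdef]
    positivity
  set G : ℕ → ℝ → ℝ := fun n t => K n * Real.exp (-(c n) * t) with hGdef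
  -- pointwise expansion
  have hpt : ∀ t ∈ Set.Ioi (0:ℝ),
      Real.exp (-s * t) * (β / (l * Real.exp (β * t) - m)) ^ ν
        = ∑' n, G n t := by
    intro t ht
    have ht0 : 0 < t := ht
    set E : ℝ := Real.exp (β * t) with hEdef
    have hEpos : 0 < E := Real.exp_pos _
    have hE1 : 1 < E := by
      rw [hEdef, show (1:ℝ) = Real.exp 0 from (Real.exp_zero).symm]
      exact Real.exp_lt_exp.mpr (by positivity)
    have hEinv : Real.exp (-(β * t)) = E⁻¹ := by rw [Real.exp_neg, hEdef]
    set x : ℝ := r * E⁻¹ with hxdef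
    have hx0 : 0 ≤ x := by positivity
    have hx1 : x < 1 := by
      have hEi : E⁻¹ < 1 := by
        rw [inv_lt_one_iff₀]
        right; exact hE1
      have : x < r := by
        rw [hxdef]
        nlinarith
      linarith
    have hden : 0 < l * E - m := by nlinarith
    have h1x : 0 < 1 - x := by linarith
    have hEne : E ≠ 0 := ne_of_gt hEpos
    have hrl : r * l = m := by rw [hrdef]; field_simp
    have hratio : β / (l * E - m) = β / l * E⁻¹ / (1 - x) := by
      rw [hxdef]
      rw [hxdef] at h1x
      rw [div_eq_div_iff (ne_of_gt hden) (ne_of_gt h1x)]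
      field_simp
      have hll : l * l⁻¹ = 1 := mul_inv_cancel₀ (ne_of_gt hl)
      linear_combination (-(β * E)) * hrl + (E*m*l - E*m^2 - m) * hll
    have hblnn : (0:ℝ) ≤ β / l := by positivity
    have hstep : (β / l * E⁻¹ / (1 - x)) ^ ν
        = (β / l) ^ ν * (E⁻¹) ^ ν * (1 - x) ^ (-ν) := by
      rw [Real.div_rpow (by positivity) h1x.le, Real.mul_rpow hblnn (by positivity),
        Real.rpow_neg h1x.le]
      ring
    rw [hratio, hstep, (hasSum_binomial hν hx0 hx1).tsum_eq.symm]
    rw [show Real.exp (-s * t) * ((β / l) ^ ν * (E⁻¹) ^ ν *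
        ∑' n : ℕ, poch ν n / n.factorial * x ^ n)
      = ∑' n : ℕ, (Real.exp (-s * t) * (β / l) ^ ν * (E⁻¹) ^ ν) *
          (poch ν n / n.factorial * x ^ n) from by rw [tsum_mul_left]; ring]
    apply tsum_congr
    intro n
    show _ = K n * Real.exp (-(c n) * t)
    have hEinvν : (E⁻¹) ^ ν = Real.exp (-(β * t) * ν) := by
      rw [← hEinv, ← Real.exp_mul]
    have hEinvn : (E⁻¹) ^ n = Real.exp ((n : ℝ) * -(β * t)) := by
      rw [← hEinv, ← Real.exp_nat_mul]
    have hxpow : x ^ n = r ^ n * Real.exp ((n:ℝ) * -(β * t)) := by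
      rw [hxdef, mul_pow, hEinvn]
    rw [hxpow, hEinvν, hKdef]
    rw [show Real.exp (-s * t) * (β / l) ^ ν * Real.exp (-(β * t) * ν) *
          (poch ν n / n.factorial * (r ^ n * Real.exp ((n:ℝ) * -(β * t))))
        = (β / l) ^ ν * (poch ν n / n.factorial * r ^ n) *
          (Real.exp (-s * t) * Real.exp (-(β * t) * ν) * Real.exp ((n:ℝ) * -(β * t))) from by
      ring]
    rw [← Real.exp_add, ← Real.exp_add]
    congr 1
    simp only [hcdef]
    ring
  -- integrability and norms
  have hInt : ∀ n, IntegrableOn (G n) (Set.Ioi 0) := fun n =>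
    (exp_neg_integrableOn_Ioi 0 (hcpos n)).const_mul (K n)
  have hval : ∀ n, (∫ t in Set.Ioi (0:ℝ), G n t) = K n * (1 / c n) := by
    intro n
    show (∫ t in Set.Ioi (0:ℝ), K n * Real.exp (-(c n) * t)) = _
    rw [MeasureTheory.integral_const_mul, integral_exp_neg_mul_Ioi_zero (hcpos n)]
  have hnorm : ∀ n, (∫ t in Set.Ioi (0:ℝ), ‖G n t‖) = K n * (1 / c n) := by
    intro n
    rw [← hval n]
    apply setIntegral_congr_fun measurableSet_Ioi
    intro t _
    show ‖G n t‖ = G n t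
    rw [Real.norm_eq_abs, abs_of_nonneg (mul_nonneg (hKnn n) (Real.exp_pos _).le)]
  have hsummable : Summable (fun n => ∫ t in Set.Ioi (0:ℝ), ‖G n t‖) := by
    have hmaj : Summable (fun n : ℕ => K n * (1 / s)) := by
      have h1 : Summable (fun n : ℕ => poch ν n / n.factorial * r ^ n) :=
        summable_q hν (by rw [abs_of_pos hr0]; exact hr1)
      exact ((h1.mul_left ((β / l) ^ ν)).mul_right (1 / s)).congr fun n => by
        simp only [hKdef]
    apply Summable.of_nonneg_of_le (fun n => ?_) (fun n => ?_) hmaj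
    · exact integral_nonneg fun t => norm_nonneg _
    · rw [hnorm n]
      refine mul_le_mul_of_nonneg_left ?_ (hKnn n)
      apply one_div_le_one_div_of_le hs
      have h0 : (0:ℝ) ≤ β * ν + β * n := by positivity
      simp only [hcdef]
      linarith
  have hswap := MeasureTheory.integral_tsum_of_summable_integral_norm hInt hsummable
  rw [setIntegral_congr_fun measurableSet_Ioi hpt, ← hswap]
  rw [show (∑' n, ∫ t in Set.Ioi (0:ℝ), G n t) = ∑' n, K n * (1 / c n) from
    tsum_congr fun n => hval n]
  -- final algebra
  rw [← tsum_mul_left]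
  apply tsum_congr
  intro n
  have hsβ : s = β * σ := by rw [hσdef]; field_simp
  have haν : a = l * ν := by rw [hνdef]; field_simp
  have hνσ : 0 < ν + σ := by linarith
  have hM : (0:ℝ) < (ν + σ) + n := by positivity
  have h23 : poch (1 + ν + σ) n * (ν + σ) = poch (ν + σ) n * ((ν + σ) + n) := by
    rw [show (1:ℝ) + ν + σ = 1 + (ν + σ) from by ring]
    exact poch_one_add (ν + σ) n
  have hP1 := poch_pos hν n
  have hP2 := poch_pos (show 0 < ν + σ from hνσ) n
  have hP3 := poch_pos (show 0 < 1 + ν + σ from by linarith) n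
  have hfn : (0:ℝ) < (n.factorial : ℝ) := by positivity
  have hcn' : c n = β * ((ν + σ) + n) := by
    simp only [hcdef]
    linear_combination hsβ
  have hden' : l * s + β * a = l * β * (ν + σ) := by
    linear_combination l * hsβ + β * haν
  rw [hcn', hden']
  simp only [hKdef]
  have hP : poch (ν + σ) n = poch (1 + ν + σ) n * (ν + σ) / ((ν + σ) + n) := by
    rw [eq_div_iff (ne_of_gt hM)]
    linarith [h23]
  rw [hP]
  have h2 : poch (1 + ν + σ) n ≠ 0 := ne_of_gt hP3
  have h3 : (n.factorial : ℝ) ≠ 0 := ne_of_gt hfn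
  have h4 : ν + σ ≠ 0 := ne_of_gt hνσ
  have h5 : (ν + σ) + n ≠ 0 := ne_of_gt hM
  have h6 : β ≠ 0 := ne_of_gt hβ
  have h7 : l ≠ 0 := ne_of_gt hl
  field_simp
end
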